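/- For any finite sequence X = (x^1, …, x^n) in [0,1)^d, the star discrepancy satisfies d*∞(X) = max{ max_{y ∈ Γ̄(X)} ( V_y − A(y,X)/n ), max_{y ∈ Γ(X)} ( Ā(y,X)/n − V_y ) }. In particular, the supremum defining d*∞(X) is attained on the finite grids Γ̄(X) and Γ(X). -/

import Mathlib

open Finset

noncomputable def starVol {d : ℕ} (y : Fin d → ℝ) : ℝ := ∏ j, y j

noncomputable def countOpen {n d : ℕ} (X : Fin n → Fin d → ℝ) (y : Fin d → ℝ) : ℕ :=
  (Finset.univ.filter fun i => ∀ j, X i j < y j).card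

noncomputable def countClosed {n d : ℕ} (X : Fin n → Fin d → ℝ) (y : Fin d → ℝ) : ℕ :=
  (Finset.univ.filter fun i => ∀ j, X i j ≤ y j).card

noncomputable def gammaBar {n d : ℕ} (X : Fin n → Fin d → ℝ) (j : Fin d) : Finset ℝ :=
  (Finset.univ.image fun i => X i j) ∪ {1}

noncomputable def gamma {n d : ℕ} (X : Fin n → Fin d → ℝ) (j : Fin d) : Finset ℝ :=
  Finset.univ.image fun i => X i j

/-- The star discrepancy (the sup over `(0,1]^d` of `|V_y - A(y,X)/n|`) is attained on the
finite grids: it equals the maximum of `V_y - A(y,X)/n` over the grid `Γ̄(X)` and of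
`Ā(y,X)/n - V_y` over the grid `Γ(X)`. -/
theorem stmt0 (n d : ℕ) (hn : 0 < n) (hd : 0 < d)
    (X : Fin n → Fin d → ℝ) (hX : ∀ i j, X i j ∈ Set.Ico (0 : ℝ) 1) :
    sSup {r : ℝ | ∃ y : Fin d → ℝ, (∀ j, y j ∈ Set.Ioc (0 : ℝ) 1) ∧
        r = |starVol y - (countOpen X y : ℝ) / n|} =
      max
        ((Fintype.piFinset fun j => gammaBar X j).sup'
          ⟨fun _ => 1, by simp [Fintype.mem_piFinset, gammaBar]⟩
          fun y => starVol y - (countOpen X y : ℝ) / n)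
        ((Fintype.piFinset fun j => gamma X j).sup'
          ⟨fun j => X ⟨0, hn⟩ j, by
            simp only [Fintype.mem_piFinset, gamma, Finset.mem_image, Finset.mem_univ, true_and]
            exact fun j => ⟨⟨0, hn⟩, rfl⟩⟩
          fun y => (countClosed X y : ℝ) / n - starVol y) := by
  have hX0 : ∀ i j, 0 ≤ X i j := fun i j => (hX i j).1
  have hX1 : ∀ i j, X i j < 1 := fun i j => (hX i j).2
  have hn' : (0:ℝ) < n := by exact_mod_cast hn
  set S : Set ℝ := {r : ℝ | ∃ y : Fin d → ℝ, (∀ j, y j ∈ Set.Ioc (0 : ℝ) 1) ∧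
      r = |starVol y - (countOpen X y : ℝ) / n|} with hSdef
  set ne1 : (Fintype.piFinset fun j => gammaBar X j).Nonempty :=
    ⟨fun _ => 1, by simp [Fintype.mem_piFinset, gammaBar]⟩ with hne1
  set ne2 : (Fintype.piFinset fun j => gamma X j).Nonempty :=
    ⟨fun j => X ⟨0, hn⟩ j, by
      simp only [Fintype.mem_piFinset, gamma, Finset.mem_image, Finset.mem_univ, true_and]
      exact fun j => ⟨⟨0, hn⟩, rfl⟩⟩ with hne2
  set M : ℝ := max
      ((Fintype.piFinset fun j => gammaBar X j).sup' ne1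
        fun y => starVol y - (countOpen X y : ℝ) / n)
      ((Fintype.piFinset fun j => gamma X j).sup' ne2
        fun y => (countClosed X y : ℝ) / n - starVol y) with hMdef
  -- the all-ones point
  have hones_mem : (fun _ : Fin d => (1:ℝ)) ∈ Fintype.piFinset fun j => gammaBar X j := by
    simp [Fintype.mem_piFinset, gammaBar]
  have hcountones : countOpen X (fun _ => (1:ℝ)) = n := by
    unfold countOpen
    rw [Finset.filter_true_of_mem (fun i _ => fun j => hX1 i j)]
    simp
  have hvalones : starVol (fun _ : Fin d => (1:ℝ)) - (countOpen X (fun _ => (1:ℝ)) : ℝ) / n = 0 := by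
    simp [starVol, hcountones, div_self hn'.ne']
  have h0S : (0:ℝ) ∈ S := by
    refine ⟨fun _ => 1, fun j => ⟨one_pos, le_refl 1⟩, ?_⟩
    rw [hvalones, abs_zero]
  have hM0 : 0 ≤ M := by
    refine le_trans ?_ (le_max_left _ _)
    calc (0:ℝ) = starVol (fun _ : Fin d => (1:ℝ)) - (countOpen X (fun _ => (1:ℝ)) : ℝ) / n :=
          hvalones.symm
      _ ≤ _ := Finset.le_sup' (fun y => starVol y - (countOpen X y : ℝ) / n) hones_mem
  -- upper bound: every element of S is ≤ M
  have hub : ∀ r ∈ S, r ≤ M := by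
    rintro r ⟨y, hy, rfl⟩
    rw [abs_sub_le_iff]
    constructor
    · -- starVol y - countOpen/n ≤ M, via the point y⁺ on the gammaBar grid
      have hFne : ∀ j, ((gammaBar X j).filter (fun z => y j ≤ z)).Nonempty := by
        intro j
        exact ⟨1, by simp [gammaBar, (hy j).2]⟩
      set yp : Fin d → ℝ := fun j => ((gammaBar X j).filter (fun z => y j ≤ z)).min' (hFne j)
        with hyp
      have hypmem : ∀ j, yp j ∈ (gammaBar X j).filter (fun z => y j ≤ z) :=
        fun j => Finset.min'_mem _ _
      have hyle : ∀ j, y j ≤ yp j := fun j => (Finset.mem_filter.1 (hypmem j)).2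
      have hypgrid : yp ∈ Fintype.piFinset fun j => gammaBar X j := by
        rw [Fintype.mem_piFinset]
        exact fun j => (Finset.mem_filter.1 (hypmem j)).1
      have hcount : countOpen X yp ≤ countOpen X y := by
        apply Finset.card_le_card
        intro i hi
        rw [Finset.mem_filter] at hi ⊢
        refine ⟨Finset.mem_univ _, fun j => ?_⟩
        by_contra hcon
        push_neg at hcon
        have hXg : X i j ∈ (gammaBar X j).filter (fun z => y j ≤ z) := by
          refine Finset.mem_filter.2 ⟨?_, hcon⟩
          simp [gammaBar]
        exact absurd (hi.2 j) (not_lt.2 (Finset.min'_le _ _ hXg))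
      have hvol : starVol y ≤ starVol yp := by
        unfold starVol
        exact Finset.prod_le_prod (fun j _ => (hy j).1.le) (fun j _ => hyle j)
      refine le_trans ?_ (le_trans (Finset.le_sup' (fun y => starVol y - (countOpen X y : ℝ) / n) hypgrid) (le_max_left _ _))
      have hcc : (countOpen X yp : ℝ) ≤ (countOpen X y : ℝ) := by exact_mod_cast hcount
      have : (countOpen X yp : ℝ) / n ≤ (countOpen X y : ℝ) / n := by gcongr
      linarith
    · -- countOpen/n - starVol y ≤ M
      by_cases hA : countOpen X y = 0
      · have : 0 ≤ starVol y := Finset.prod_nonneg fun j _ => (hy j).1.le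
        rw [hA]
        simp only [Nat.cast_zero, zero_div, zero_sub]
        linarith
      · obtain ⟨i0, hi0⟩ := Finset.card_pos.1 (Nat.pos_of_ne_zero hA)
        have hi0' : ∀ j, X i0 j < y j := (Finset.mem_filter.1 hi0).2
        have hFne : ∀ j, ((gamma X j).filter (fun z => z < y j)).Nonempty := by
          intro j
          exact ⟨X i0 j, by
            refine Finset.mem_filter.2 ⟨?_, hi0' j⟩
            simp [gamma]⟩
        set ym : Fin d → ℝ := fun j => ((gamma X j).filter (fun z => z < y j)).max' (hFne j)
          with hym
        have hymmem : ∀ j, ym j ∈ (gamma X j).filter (fun z => z < y j) :=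
          fun j => Finset.max'_mem _ _
        have hymlt : ∀ j, ym j < y j := fun j => (Finset.mem_filter.1 (hymmem j)).2
        have hym0 : ∀ j, 0 ≤ ym j := by
          intro j
          obtain ⟨i, -, hi⟩ := Finset.mem_image.1 (Finset.mem_filter.1 (hymmem j)).1
          rw [← hi]; exact hX0 i j
        have hymgrid : ym ∈ Fintype.piFinset fun j => gamma X j := by
          rw [Fintype.mem_piFinset]
          exact fun j => (Finset.mem_filter.1 (hymmem j)).1
        have hcount : countOpen X y ≤ countClosed X ym := by
          apply Finset.card_le_card
          intro i hi
          rw [Finset.mem_filter] at hi ⊢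
          refine ⟨Finset.mem_univ _, fun j => ?_⟩
          apply Finset.le_max'
          refine Finset.mem_filter.2 ⟨?_, hi.2 j⟩
          simp [gamma]
        have hvol : starVol ym ≤ starVol y := by
          unfold starVol
          exact Finset.prod_le_prod (fun j _ => hym0 j) (fun j _ => (hymlt j).le)
        refine le_trans ?_ (le_trans (Finset.le_sup' (fun y => (countClosed X y : ℝ) / n - starVol y) hymgrid) (le_max_right _ _))
        have hcc : (countOpen X y : ℝ) ≤ (countClosed X ym : ℝ) := by exact_mod_cast hcount
        have : (countOpen X y : ℝ) / n ≤ (countClosed X ym : ℝ) / n := by gcongr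
        linarith
  have hbdd : BddAbove S := ⟨M, hub⟩
  have hSup0 : 0 ≤ sSup S := le_csSup hbdd h0S
  apply le_antisymm
  · exact Real.sSup_le hub hM0
  · apply max_le
    · apply Finset.sup'_le
      intro y hy
      rw [Fintype.mem_piFinset] at hy
      have hy1 : ∀ j, y j ≤ 1 := by
        intro j
        rcases Finset.mem_union.1 (hy j) with h | h
        · obtain ⟨i, -, hi⟩ := Finset.mem_image.1 h
          rw [← hi]; exact (hX1 i j).le
        · simp at h; rw [h]
      have hy0 : ∀ j, 0 ≤ y j := by
        intro j
        rcases Finset.mem_union.1 (hy j) with h | h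
        · obtain ⟨i, -, hi⟩ := Finset.mem_image.1 h
          rw [← hi]; exact hX0 i j
        · simp at h; rw [h]; norm_num
      by_cases hpos : ∀ j, 0 < y j
      · exact le_trans (le_abs_self _) (le_csSup hbdd ⟨y, fun j => ⟨hpos j, hy1 j⟩, rfl⟩)
      · push_neg at hpos
        obtain ⟨j0, hj0⟩ := hpos
        have hj0' : y j0 = 0 := le_antisymm hj0 (hy0 j0)
        have hvol : starVol y = 0 := by
          unfold starVol
          exact Finset.prod_eq_zero (Finset.mem_univ j0) hj0'
        have hcnt : countOpen X y = 0 := by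
          unfold countOpen
          rw [Finset.card_eq_zero, Finset.filter_eq_empty_iff]
          intro i _ hcon
          exact absurd (hcon j0) (by rw [hj0']; exact not_lt.2 (hX0 i j0))
        rw [hvol, hcnt]
        simpa using hSup0
    · apply Finset.sup'_le
      intro y hy
      rw [Fintype.mem_piFinset] at hy
      have hy0 : ∀ j, 0 ≤ y j := by
        intro j
        obtain ⟨i, -, hi⟩ := Finset.mem_image.1 (hy j)
        rw [← hi]; exact hX0 i j
      have hy1 : ∀ j, y j < 1 := by
        intro j
        obtain ⟨i, -, hi⟩ := Finset.mem_image.1 (hy j)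
        rw [← hi]; exact hX1 i j
      -- limit argument: approach y from above
      have hje : Nonempty (Fin d) := ⟨⟨0, hd⟩⟩
      set m : ℝ := Finset.univ.sup' ⟨⟨0, hd⟩, Finset.mem_univ _⟩ y with hm
      have hm1 : m < 1 := by
        rw [hm]; apply (Finset.sup'_lt_iff _).2
        exact fun j _ => hy1 j
      set ε0 : ℝ := 1 - m with hε0def
      have hε0 : 0 < ε0 := by simp [hε0def]; linarith
      have key : ∀ δ ∈ Set.Ioo (0:ℝ) ε0,
          (countClosed X y : ℝ) / n - ∏ j, (y j + δ) ≤ sSup S := by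
        intro δ hδ
        set yδ : Fin d → ℝ := fun j => y j + δ with hyδ
        have hyδmem : ∀ j, yδ j ∈ Set.Ioc (0:ℝ) 1 := by
          intro j
          constructor
          · have := hy0 j; simp [hyδ]; linarith [hδ.1]
          · have hym : y j ≤ m := Finset.le_sup' _ (Finset.mem_univ j)
            have := hδ.2
            simp only [hyδ]
            rw [hε0def] at this
            linarith
        have hcount : countClosed X y ≤ countOpen X yδ := by
          apply Finset.card_le_card
          intro i hi
          rw [Finset.mem_filter] at hi ⊢
          exact ⟨Finset.mem_univ _, fun j => lt_of_le_of_lt (hi.2 j) (by simp [hyδ, hδ.1])⟩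
        have hmem : |starVol yδ - (countOpen X yδ : ℝ) / n| ∈ S := ⟨yδ, hyδmem, rfl⟩
        refine le_trans ?_ (le_csSup hbdd hmem)
        have hcc : (countClosed X y : ℝ) ≤ (countOpen X yδ : ℝ) := by exact_mod_cast hcount
        have h1 : (countClosed X y : ℝ) / n ≤ (countOpen X yδ : ℝ) / n := by gcongr
        have h2 : (countOpen X yδ : ℝ) / n - starVol yδ ≤ |starVol yδ - (countOpen X yδ : ℝ) / n| := by
          rw [abs_sub_comm]; exact le_abs_self _
        have h3 : starVol yδ = ∏ j, (y j + δ) := rfl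
        linarith
      have tend : Filter.Tendsto (fun δ : ℝ => (countClosed X y : ℝ) / n - ∏ j, (y j + δ))
          (nhdsWithin 0 (Set.Ioi 0)) (nhds ((countClosed X y : ℝ) / n - ∏ j, y j)) := by
        have hc : Continuous (fun δ : ℝ => (countClosed X y : ℝ) / n - ∏ j, (y j + δ)) := by
          fun_prop
        have := hc.tendsto 0
        simp only [add_zero] at this
        exact this.mono_left nhdsWithin_le_nhds
      have hev : ∀ᶠ δ in nhdsWithin (0:ℝ) (Set.Ioi 0),
          (countClosed X y : ℝ) / n - ∏ j, (y j + δ) ≤ sSup S := by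
        filter_upwards [Ioo_mem_nhdsGT_of_mem ⟨le_refl 0, hε0⟩] with δ hδ
        exact key δ hδ
      have := le_of_tendsto tend hev
      simpa [starVol] using this
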